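/- For every integer n ≥ 3, the function x ↦ (n/(n+1))·ψ₂⁽ⁿ⁻¹⁾(x)·ψ₂⁽ⁿ⁺¹⁾(x) − (ψ₂⁽ⁿ⁾(x))² is completely monotonic on (0,∞). -/

import Mathlib

open scoped BigOperators

namespace Stmt14Aux

/-- basic single series bound -/
lemma summable_single {x : ℝ} (hx : 0 < x) (s p : ℕ) (hp : s + 2 ≤ p) :
    Summable (fun a : ℕ => (1 + (a:ℝ)) ^ s / (x + a) ^ p) := by
  set d : ℝ := min x 1 with hd
  have hd0 : 0 < d := lt_min hx one_pos
  have hbase : Summable (fun a : ℕ => (1 / d ^ p) * (1 / (1 + (a:ℝ)) ^ 2)) := by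
    apply Summable.mul_left
    have h2 : Summable (fun n : ℕ => 1 / ((n:ℝ)) ^ 2) :=
      Real.summable_one_div_nat_pow.2 one_lt_two
    have := (summable_nat_add_iff 1).2 h2
    apply this.congr
    intro a
    push_cast
    ring_nf
  apply Summable.of_nonneg_of_le (fun a => by positivity) _ hbase
  intro a
  have ha1 : (0:ℝ) < 1 + a := by positivity
  have hxa : (0:ℝ) < x + a := by positivity
  have hkey : d * (1 + (a:ℝ)) ≤ x + a := by
    have h1 : d ≤ x := min_le_left _ _
    have h2 : d ≤ 1 := min_le_right _ _
    have : d * (a:ℝ) ≤ (a:ℝ) := by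
      nlinarith [Nat.cast_nonneg (α := ℝ) a]
    nlinarith
  have hpow : (d * (1 + (a:ℝ))) ^ p ≤ (x + a) ^ p :=
    pow_le_pow_left₀ (by positivity) hkey p
  have h1 : (1 + (a:ℝ)) ^ s / (x + a) ^ p ≤ (1 + (a:ℝ)) ^ s / (d * (1 + (a:ℝ))) ^ p := by
    apply div_le_div_of_nonneg_left (by positivity) (by positivity) hpow
  refine h1.trans ?_
  have hsplit : ((1:ℝ)+a) ^ p = (1+(a:ℝ)) ^ s * (1+(a:ℝ)) ^ (p - s) := by
    rw [← pow_add]; congr 1; omega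
  have e1 : (1+(a:ℝ))^s / (d*(1+a))^p = (1/d^p) * ((1:ℝ)/(1+(a:ℝ))^(p-s)) := by
    rw [mul_pow, hsplit]
    field_simp
  rw [e1]
  apply mul_le_mul_of_nonneg_left _ (by positivity)
  apply one_div_le_one_div_of_le (by positivity)
  exact pow_le_pow_right₀ (by linarith) (by omega)

end Stmt14Aux

namespace Stmt14Aux

/-- weighted pair term -/
noncomputable def P (p q : ℕ) (ab : ℕ × ℕ) (x : ℝ) : ℝ :=
  (1+(ab.1:ℝ)) * (1+(ab.2:ℝ)) * ((ab.1:ℝ)-(ab.2:ℝ))^2 * (x+ab.1)^(-(p:ℤ)) * (x+ab.2)^(-(q:ℤ))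

noncomputable def G (p q : ℕ) (x : ℝ) : ℝ := ∑' ab : ℕ × ℕ, P p q ab x

lemma P_nonneg (p q : ℕ) (ab : ℕ × ℕ) {x : ℝ} (hx : 0 < x) : 0 ≤ P p q ab x := by
  have h1 : (0:ℝ) < x + ab.1 := by positivity
  have h2 : (0:ℝ) < x + ab.2 := by positivity
  have := zpow_nonneg h1.le (-(p:ℤ))
  have := zpow_nonneg h2.le (-(q:ℤ))
  unfold P
  positivity

lemma P_antitone (p q : ℕ) (ab : ℕ × ℕ) {x y : ℝ} (hx : 0 < x) (hxy : x ≤ y) :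
    P p q ab y ≤ P p q ab x := by
  have h1 : (0:ℝ) < x + ab.1 := by positivity
  have h2 : (0:ℝ) < x + ab.2 := by positivity
  have h3 : (0:ℝ) < y + ab.1 := by linarith
  have h4 : (0:ℝ) < y + ab.2 := by linarith
  unfold P
  have key : ∀ (c : ℕ) (m : ℕ), (y + (c:ℝ)) ^ (-(m:ℤ)) ≤ (x + c) ^ (-(m:ℤ)) := by
    intro c m
    have hc1 : (0:ℝ) < x + c := by positivity
    have hc2 : (0:ℝ) < y + c := by linarith
    rw [zpow_neg, zpow_neg, zpow_natCast, zpow_natCast]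
    apply inv_anti₀ (by positivity)
    exact pow_le_pow_left₀ hc1.le (by linarith) m
  have hw : (0:ℝ) ≤ (1+(ab.1:ℝ)) * (1+(ab.2:ℝ)) * ((ab.1:ℝ)-(ab.2:ℝ))^2 := by positivity
  calc (1+(ab.1:ℝ)) * (1+(ab.2:ℝ)) * ((ab.1:ℝ)-(ab.2:ℝ))^2 * (y+ab.1)^(-(p:ℤ)) * (y+ab.2)^(-(q:ℤ))
      ≤ (1+(ab.1:ℝ)) * (1+(ab.2:ℝ)) * ((ab.1:ℝ)-(ab.2:ℝ))^2 * (x+ab.1)^(-(p:ℤ)) * (x+ab.2)^(-(q:ℤ)) := by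
        apply mul_le_mul
        · exact mul_le_mul_of_nonneg_left (key ab.1 p) hw
        · exact key ab.2 q
        · exact zpow_nonneg h4.le _
        · positivity

end Stmt14Aux

namespace Stmt14Aux

lemma summable_P {p q : ℕ} (hp : 5 ≤ p) (hq : 5 ≤ q) {x : ℝ} (hx : 0 < x) :
    Summable (fun ab : ℕ × ℕ => P p q ab x) := by
  have hf : Summable (fun a : ℕ => (1+(a:ℝ))^3 / (x+a)^p) := summable_single hx 3 p (by omega)
  have hg : Summable (fun b : ℕ => (1+(b:ℝ))^3 / (x+b)^q) := summable_single hx 3 q (by omega)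
  have hprod := hf.mul_of_nonneg hg (fun a => by positivity) (fun b => by positivity)
  apply Summable.of_nonneg_of_le (fun ab => P_nonneg p q ab hx) _ hprod
  rintro ⟨a,b⟩
  have h1 : (0:ℝ) < x + a := by positivity
  have h2 : (0:ℝ) < x + b := by positivity
  have hab : ((a:ℝ)-(b:ℝ))^2 ≤ (1+(a:ℝ))^2*(1+(b:ℝ))^2 := by
    nlinarith [Nat.cast_nonneg (α := ℝ) a, Nat.cast_nonneg (α := ℝ) b,
      mul_nonneg (Nat.cast_nonneg (α := ℝ) a) (Nat.cast_nonneg (α := ℝ) b)]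
  have hnum := mul_le_mul_of_nonneg_left hab
    (show (0:ℝ) ≤ (1+(a:ℝ))*(1+(b:ℝ)) by positivity)
  show (1+(a:ℝ)) * (1+(b:ℝ)) * ((a:ℝ)-(b:ℝ))^2 * (x+a)^(-(p:ℤ)) * (x+b)^(-(q:ℤ)) ≤ _
  rw [zpow_neg, zpow_neg, zpow_natCast, zpow_natCast, div_mul_div_comm]
  have e1 : (1+(a:ℝ)) * (1+(b:ℝ)) * ((a:ℝ)-(b:ℝ))^2 * ((x+a)^p)⁻¹ * ((x+b)^q)⁻¹
      = ((1+(a:ℝ)) * (1+(b:ℝ)) * ((a:ℝ)-(b:ℝ))^2) / ((x+a)^p * (x+b)^q) := by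
    rw [div_eq_mul_inv, mul_inv]; ring
  rw [e1, div_le_div_iff_of_pos_right (by positivity)]
  nlinarith [hnum]

lemma hasDerivAt_P (p q : ℕ) (ab : ℕ × ℕ) {y : ℝ} (hy1 : 0 < y + ab.1) (hy2 : 0 < y + ab.2) :
    HasDerivAt (fun z => P p q ab z)
      (-((p:ℝ) * P (p+1) q ab y) - (q:ℝ) * P p (q+1) ab y) y := by
  obtain ⟨a,b⟩ := ab
  simp only [P]
  have h1 : HasDerivAt (fun z : ℝ => z + (a:ℝ)) 1 y := (hasDerivAt_id y).add_const _
  have h2 : HasDerivAt (fun z : ℝ => z + (b:ℝ)) 1 y := (hasDerivAt_id y).add_const _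
  have f1 := HasDerivAt.comp y (hasDerivAt_zpow (-(p:ℤ)) (y + (a:ℝ)) (Or.inl hy1.ne')) h1
  have f2 := HasDerivAt.comp y (hasDerivAt_zpow (-(q:ℤ)) (y + (b:ℝ)) (Or.inl hy2.ne')) h2
  have hw := ((f1.mul f2).const_mul ((1+(a:ℝ)) * (1+(b:ℝ)) * ((a:ℝ)-(b:ℝ))^2))
  have ea : (y + (a:ℝ)) ^ (-(p:ℤ) - 1) = (y + a) ^ (-((p+1 : ℕ):ℤ)) := by
    congr 1; push_cast; ring
  have eb : (y + (b:ℝ)) ^ (-(q:ℤ) - 1) = (y + b) ^ (-((q+1 : ℕ):ℤ)) := by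
    congr 1; push_cast; ring
  convert hw using 1
  · rfl
  · rfl
  · ext z; simp only [Pi.mul_apply, Function.comp_apply]; ring
  · simp only [Function.comp_apply, ea, eb]; push_cast; ring

lemma hasDerivAt_G {p q : ℕ} (hp : 5 ≤ p) (hq : 5 ≤ q) {x : ℝ} (hx : 0 < x) :
    HasDerivAt (G p q) (-((p:ℝ) * G (p+1) q x) - (q:ℝ) * G p (q+1) x) x := by
  have hε : 0 < x/2 := by linarith
  have hs1 : Summable (fun ab : ℕ × ℕ => P (p+1) q ab (x/2)) := summable_P (by omega) hq hε
  have hs2 : Summable (fun ab : ℕ × ℕ => P p (q+1) ab (x/2)) := summable_P hp (by omega) hε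
  have hs1x : Summable (fun ab : ℕ × ℕ => P (p+1) q ab x) := summable_P (by omega) hq hx
  have hs2x : Summable (fun ab : ℕ × ℕ => P p (q+1) ab x) := summable_P hp (by omega) hx
  have hu : Summable (fun ab : ℕ × ℕ =>
      (p:ℝ) * P (p+1) q ab (x/2) + (q:ℝ) * P p (q+1) ab (x/2)) :=
    (hs1.mul_left _).add (hs2.mul_left _)
  have key := hasDerivAt_tsum_of_isPreconnected hu isOpen_Ioi isPreconnected_Ioi
    (t := Set.Ioi (x/2)) (g := fun ab z => P p q ab z)
    (g' := fun ab z => -((p:ℝ) * P (p+1) q ab z) - (q:ℝ) * P p (q+1) ab z)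
    (y₀ := x) (y := x) ?_ ?_ ?_ ?_ ?_
  · have etsum : (∑' ab : ℕ × ℕ, (-((p:ℝ) * P (p+1) q ab x) - (q:ℝ) * P p (q+1) ab x))
        = -((p:ℝ) * G (p+1) q x) - (q:ℝ) * G p (q+1) x := by
      have e : (fun ab : ℕ × ℕ => -((p:ℝ) * P (p+1) q ab x) - (q:ℝ) * P p (q+1) ab x)
          = fun ab => (-(p:ℝ)) * P (p+1) q ab x + (-(q:ℝ)) * P p (q+1) ab x := by
        ext ab; ring
      rw [e, Summable.tsum_add (hs1x.mul_left _) (hs2x.mul_left _), tsum_mul_left, tsum_mul_left]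
      unfold G; ring
    rw [etsum] at key
    exact key
  · rintro ab y (hy : x/2 < y)
    exact hasDerivAt_P p q ab (by have := ab.1.cast_nonneg (α := ℝ); linarith)
      (by have := ab.2.cast_nonneg (α := ℝ); linarith)
  · rintro ab y (hy : x/2 < y)
    show ‖-((p:ℝ) * P (p+1) q ab y) - (q:ℝ) * P p (q+1) ab y‖ ≤ _
    have hy0 : 0 < y := lt_trans hε hy
    have hP1 : 0 ≤ P (p+1) q ab y := P_nonneg _ _ _ hy0
    have hP2 : 0 ≤ P p (q+1) ab y := P_nonneg _ _ _ hy0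
    have b1 : P (p+1) q ab y ≤ P (p+1) q ab (x/2) := P_antitone _ _ _ hε hy.le
    have b2 : P p (q+1) ab y ≤ P p (q+1) ab (x/2) := P_antitone _ _ _ hε hy.le
    have c1 : 0 ≤ (p:ℝ) * P (p+1) q ab y := mul_nonneg (Nat.cast_nonneg _) hP1
    have c2 : 0 ≤ (q:ℝ) * P p (q+1) ab y := mul_nonneg (Nat.cast_nonneg _) hP2
    rw [Real.norm_eq_abs, abs_of_nonpos (by linarith)]
    have : -(-((p:ℝ) * P (p+1) q ab y) - (q:ℝ) * P p (q+1) ab y)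
        = (p:ℝ) * P (p+1) q ab y + (q:ℝ) * P p (q+1) ab y := by ring
    rw [this]
    exact add_le_add (mul_le_mul_of_nonneg_left b1 (by positivity))
      (mul_le_mul_of_nonneg_left b2 (by positivity))
  · exact half_lt_self hx
  · exact summable_P hp hq hx
  · exact half_lt_self hx

end Stmt14Aux

namespace Stmt14Aux

inductive CM : (ℝ → ℝ) → Prop
  | base (p q : ℕ) (hp : 5 ≤ p) (hq : 5 ≤ q) : CM (G p q)
  | add {f g : ℝ → ℝ} : CM f → CM g → CM (fun x => f x + g x)
  | smul (c : ℝ) (hc : 0 ≤ c) {f : ℝ → ℝ} : CM f → CM (fun x => c * f x)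

lemma CM.nonneg {f : ℝ → ℝ} (h : CM f) : ∀ x : ℝ, 0 < x → 0 ≤ f x := by
  induction h with
  | base p q hp hq => exact fun x hx => tsum_nonneg (fun ab => P_nonneg p q ab hx)
  | add h1 h2 ih1 ih2 => exact fun x hx => add_nonneg (ih1 x hx) (ih2 x hx)
  | smul c hc h ih => exact fun x hx => mul_nonneg hc (ih x hx)

lemma CM.deriv {f : ℝ → ℝ} (h : CM f) :
    ∃ g, CM g ∧ ∀ x : ℝ, 0 < x → HasDerivAt f (-(g x)) x := by
  induction h with
  | base p q hp hq =>
    refine ⟨fun x => (p:ℝ) * G (p+1) q x + (q:ℝ) * G p (q+1) x,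
      CM.add (CM.smul p (by positivity) (CM.base (p+1) q (by omega) hq))
        (CM.smul q (by positivity) (CM.base p (q+1) hp (by omega))), fun x hx => ?_⟩
    have := hasDerivAt_G hp hq hx
    convert this using 1
    ring
  | add h1 h2 ih1 ih2 =>
    obtain ⟨g1, hg1, hd1⟩ := ih1
    obtain ⟨g2, hg2, hd2⟩ := ih2
    refine ⟨fun x => g1 x + g2 x, CM.add hg1 hg2, fun x hx => ?_⟩
    have := (hd1 x hx).add (hd2 x hx)
    convert this using 1
    · rfl
    · rfl
    · rfl
    ring
  | smul c hc h ih =>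
    obtain ⟨g, hg, hd⟩ := ih
    refine ⟨fun x => c * g x, CM.smul c hc hg, fun x hx => ?_⟩
    have := (hd x hx).const_mul c
    convert this using 1
    · rfl
    · rfl
    ring

lemma key_iter (F f : ℝ → ℝ) (hf : CM f) (hF : ∀ x : ℝ, 0 < x → F x = f x) :
    ∀ k : ℕ, ∃ g, CM g ∧ ∀ x : ℝ, 0 < x → deriv^[k] F x = (-1)^k * g x := by
  intro k
  induction k with
  | zero => exact ⟨f, hf, fun x hx => by simpa using hF x hx⟩
  | succ k ih =>
    obtain ⟨g, hg, hd⟩ := ih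
    obtain ⟨g', hg', hd'⟩ := hg.deriv
    refine ⟨g', hg', fun x hx => ?_⟩
    rw [Function.iterate_succ_apply']
    have hev : deriv^[k] F =ᶠ[nhds x] fun y => (-1:ℝ)^k * g y := by
      filter_upwards [IsOpen.mem_nhds isOpen_Ioi hx] with y hy using hd y hy
    rw [hev.deriv_eq]
    have hD : HasDerivAt (fun y => (-1:ℝ)^k * g y) ((-1:ℝ)^k * (-(g' x))) x :=
      (hd' x hx).const_mul _
    rw [hD.deriv]
    ring

end Stmt14Aux

noncomputable def psi2 (n : ℕ) (x : ℝ) : ℝ :=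
  (-1) ^ (n + 1) * (n.factorial : ℝ) * ∑' k : ℕ, (1 + (k : ℝ)) / (x + k) ^ (n + 1)

namespace Stmt14Aux

lemma summable_term {x : ℝ} (hx : 0 < x) {p : ℕ} (hp : 3 ≤ p) :
    Summable (fun k : ℕ => (1 + (k:ℝ)) / (x + k) ^ p) := by
  have h := summable_single hx 1 p (by omega)
  apply h.congr
  intro a
  rw [pow_one]

lemma norm_summable_term {x : ℝ} (hx : 0 < x) {p : ℕ} (hp : 3 ≤ p) :
    Summable (fun k : ℕ => ‖(1 + (k:ℝ)) / (x + k) ^ p‖) := by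
  apply (summable_term hx hp).congr
  intro a
  rw [Real.norm_eq_abs, abs_of_nonneg (by positivity)]

set_option maxHeartbeats 2000000 in
lemma repr_key (n : ℕ) (hn : 3 ≤ n) {x : ℝ} (hx : 0 < x) :
    ((n : ℝ) / (n + 1)) * psi2 (n - 1) x * psi2 (n + 1) x - (psi2 n x) ^ 2
      = ((n.factorial : ℝ) ^ 2 / 2) * G (n + 2) (n + 2) x := by
  classical
  set u : ℕ → ℕ → ℝ := fun p k => (1 + (k:ℝ)) / (x + k) ^ p with hu
  have hA : Summable (u n) := summable_term hx (by omega)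
  have hB : Summable (u (n+1)) := summable_term hx (by omega)
  have hC : Summable (u (n+2)) := summable_term hx (by omega)
  have hnA : Summable (fun k => ‖u n k‖) := norm_summable_term hx (by omega)
  have hnB : Summable (fun k => ‖u (n+1) k‖) := norm_summable_term hx (by omega)
  have hnC : Summable (fun k => ‖u (n+2) k‖) := norm_summable_term hx (by omega)
  -- step 1 : express psi2's
  have e1 : psi2 (n-1) x = (-1:ℝ)^n * ((n-1).factorial : ℝ) * ∑' k, u n k := by
    have h1 : n - 1 + 1 = n := by omega
    simp only [psi2, h1, hu]
  have e2 : psi2 (n+1) x = (-1:ℝ)^(n+2) * ((n+1).factorial : ℝ) * ∑' k, u (n+2) k := by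
    simp only [psi2, hu]
  have e3 : psi2 n x = (-1:ℝ)^(n+1) * (n.factorial : ℝ) * ∑' k, u (n+1) k := by
    simp only [psi2, hu]
  set A := ∑' k, u n k
  set B := ∑' k, u (n+1) k
  set C := ∑' k, u (n+2) k
  have sign1 : (-1:ℝ)^n * (-1:ℝ)^(n+2) = 1 := by
    rw [← pow_add]
    have h : n + (n + 2) = 2 * (n + 1) := by ring
    rw [h, pow_mul]
    norm_num
  have sign2 : ((-1:ℝ)^(n+1))^2 = 1 := by
    rw [← pow_mul, mul_comm, pow_mul]
    norm_num
  have fact1 : ((n+1).factorial : ℝ) = (n+1) * n.factorial := by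
    exact_mod_cast congrArg (Nat.cast (R := ℝ)) (Nat.factorial_succ n)
  have fact2 : (n.factorial : ℝ) = n * ((n-1).factorial : ℝ) := by
    have h1 : n = (n - 1) + 1 := by omega
    rw [h1, Nat.factorial_succ]
    push_cast [← h1]
    ring
  have hn1 : ((n:ℝ) + 1) ≠ 0 := by positivity
  have hfact : ((n:ℝ)/(n+1)) * ((n-1).factorial : ℝ) * ((n+1).factorial : ℝ)
      = (n.factorial:ℝ)^2 := by
    rw [fact1, fact2]
    field_simp
  have step1 : ((n : ℝ) / (n + 1)) * psi2 (n - 1) x * psi2 (n + 1) x - (psi2 n x) ^ 2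
      = (n.factorial : ℝ)^2 * (A * C - B^2) := by
    rw [e1, e2, e3]
    have expand : ((n:ℝ)/(↑n+1)) * ((-1:ℝ)^n * ((n-1).factorial:ℝ) * A)
          * ((-1:ℝ)^(n+2) * ((n+1).factorial:ℝ) * C)
        - ((-1:ℝ)^(n+1) * (n.factorial:ℝ) * B)^2
        = ((-1:ℝ)^n*(-1:ℝ)^(n+2)) * (((n:ℝ)/(↑n+1)) * ((n-1).factorial:ℝ)
            * ((n+1).factorial:ℝ)) * (A*C)
          - ((-1:ℝ)^(n+1))^2 * ((n.factorial:ℝ)^2 * B^2) := by ring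
    rw [expand, sign1, sign2, hfact]
    ring
  -- step 2 : A * C - B ^ 2 = G (n+2) (n+2) x / 2
  have hAC : A * C = ∑' z : ℕ × ℕ, u n z.1 * u (n+2) z.2 :=
    tsum_mul_tsum_of_summable_norm hnA hnC
  have hBB : B * B = ∑' z : ℕ × ℕ, u (n+1) z.1 * u (n+1) z.2 :=
    tsum_mul_tsum_of_summable_norm hnB hnB
  have sAC : Summable (fun z : ℕ × ℕ => u n z.1 * u (n+2) z.2) :=
    summable_mul_of_summable_norm hnA hnC
  have sBB : Summable (fun z : ℕ × ℕ => u (n+1) z.1 * u (n+1) z.2) :=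
    summable_mul_of_summable_norm hnB hnB
  set D : ℕ × ℕ → ℝ := fun z => u n z.1 * u (n+2) z.2 - u (n+1) z.1 * u (n+1) z.2 with hD
  have sD : Summable D := sAC.sub sBB
  have hdiff : A * C - B^2 = ∑' z, D z := by
    rw [sq, hAC, hBB, Summable.tsum_sub sAC sBB]
  have sD' : Summable (fun z : ℕ × ℕ => D (Prod.swap z)) :=
    (Equiv.summable_iff (Equiv.prodComm ℕ ℕ)).2 sD
  have hswap : ∑' z : ℕ × ℕ, D (Prod.swap z) = ∑' z, D z :=
    Equiv.tsum_eq (Equiv.prodComm ℕ ℕ) D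
  have hpoint : ∀ z : ℕ × ℕ, D z + D (Prod.swap z) = P (n+2) (n+2) z x := by
    rintro ⟨a, b⟩
    have ha : (0:ℝ) < x + a := by positivity
    have hb : (0:ℝ) < x + b := by positivity
    show (1+(a:ℝ))/(x+a)^n * ((1+(b:ℝ))/(x+b)^(n+2))
        - (1+(a:ℝ))/(x+a)^(n+1) * ((1+(b:ℝ))/(x+b)^(n+1))
      + ((1+(b:ℝ))/(x+b)^n * ((1+(a:ℝ))/(x+a)^(n+2))
        - (1+(b:ℝ))/(x+b)^(n+1) * ((1+(a:ℝ))/(x+a)^(n+1)))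
      = (1+(a:ℝ)) * (1+(b:ℝ)) * ((a:ℝ)-(b:ℝ))^2
          * (x+(a:ℝ))^(-((n+2:ℕ):ℤ)) * (x+(b:ℝ))^(-((n+2:ℕ):ℤ))
    rw [zpow_neg, zpow_natCast, zpow_neg, zpow_natCast]
    field_simp
    ring
  have hsum2 : (2:ℝ) * ∑' z, D z = G (n+2) (n+2) x := by
    have h1 : ∑' z : ℕ × ℕ, (D z + D (Prod.swap z)) = ∑' z, D z + ∑' z, D (Prod.swap z) :=
      Summable.tsum_add sD sD'
    have h2 : ∑' z : ℕ × ℕ, (D z + D (Prod.swap z)) = G (n+2) (n+2) x := by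
      unfold G
      exact tsum_congr hpoint
    rw [← h2, h1, hswap]
    ring
  rw [step1, hdiff, ← hsum2]
  ring

end Stmt14Aux

theorem stmt_14 (n : ℕ) (hn : 3 ≤ n) :
    ∀ k : ℕ, ∀ x : ℝ, 0 < x →
      0 ≤ (-1) ^ k * iteratedDeriv k
        (fun y => ((n : ℝ) / (n + 1)) * psi2 (n - 1) y * psi2 (n + 1) y - (psi2 n y) ^ 2) x := by
  intro k x hx
  have hCM : Stmt14Aux.CM (fun y => ((n.factorial : ℝ)^2/2) * Stmt14Aux.G (n+2) (n+2) y) :=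
    Stmt14Aux.CM.smul _ (by positivity) (Stmt14Aux.CM.base (n+2) (n+2) (by omega) (by omega))
  obtain ⟨g, hg, hd⟩ := Stmt14Aux.key_iter _ _ hCM
    (fun y hy => Stmt14Aux.repr_key n hn hy) k
  rw [iteratedDeriv_eq_iterate, hd x hx, ← mul_assoc, ← mul_pow]
  norm_num
  exact hg.nonneg x hx
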